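/- Suppose (x₀,y₀) ∈ ℝ² satisfies a Diophantine condition with constants c₀ > 0 and d₀ > 0, and let e₀ > max(d₀,2). Then there exists L₀ > 0 such that for every w = (w₁,w₂) ∈ W with w₂ > 0 and |w| ≥ L₀, and every t ≥ e₀, there is a continued fraction convergent vector v of α := w₁/w₂ whose Euclidean length satisfies e^{t}|w|log|w| ≤ |v| ≤ |w|^{1+t}. -/

import Mathlib

open Pointwise

noncomputable section

/-- Cross product of two vectors in ℝ²: `(a,b) × (c,d) = a d − b c`. -/
def crossP (u v : ℝ × ℝ) : ℝ := u.1 * v.2 - u.2 * v.1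

/-- Euclidean inner product on ℝ². -/
def dotP (u v : ℝ × ℝ) : ℝ := u.1 * v.1 + u.2 * v.2

/-- Euclidean norm on ℝ². -/
def nrm (u : ℝ × ℝ) : ℝ := Real.sqrt (u.1 ^ 2 + u.2 ^ 2)

/-- The set `Z` of primitive integer vectors. -/
def Zset : Set (ℝ × ℝ) := {v | ∃ p q : ℤ, Int.gcd p q = 1 ∧ v = ((p : ℝ), (q : ℝ))}

/-- The set `W = ±(x₀,y₀) + ℤ²`. -/
def Wset (x₀ y₀ : ℝ) : Set (ℝ × ℝ) :=
  {w | ∃ m n : ℤ, w = (x₀ + m, y₀ + n) ∨ w = (-x₀ + m, -y₀ + n)}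

/-- The set `V = W ∪ Z` of holonomy vectors of saddle connections. -/
def Vset (x₀ y₀ : ℝ) : Set (ℝ × ℝ) := Wset x₀ y₀ ∪ Zset

/-- `1, x₀, y₀` are linearly independent over `ℚ`. -/
def QLinIndep (x₀ y₀ : ℝ) : Prop :=
  ∀ a b c : ℚ, (a : ℝ) * x₀ + (b : ℝ) * y₀ + (c : ℝ) = 0 → a = 0 ∧ b = 0 ∧ c = 0

/-- `(x₀,y₀)` satisfies a Diophantine condition with constants `c₀, d₀`. -/
def DioCond (x₀ y₀ c₀ d₀ : ℝ) : Prop :=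
  ∀ m n : ℤ, ¬(m = 0 ∧ n = 0) → ∀ l : ℤ,
    c₀ / (max |(m : ℝ)| |(n : ℝ)|) ^ d₀ < |(m : ℝ) * x₀ + (n : ℝ) * y₀ + (l : ℝ)|

/-- The `k`-th continued fraction convergent vector `(p_k, q_k)` of `α`. -/
def convVec (α : ℝ) (k : ℕ) : ℝ × ℝ :=
  ((GenContFract.of α).nums k, (GenContFract.of α).dens k)

namespace SDioAux

lemma abs_fst_le_nrm (u : ℝ × ℝ) : |u.1| ≤ nrm u := by
  rw [nrm, ← Real.sqrt_sq_eq_abs]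
  exact Real.sqrt_le_sqrt (by nlinarith [sq_nonneg u.2])

lemma abs_snd_le_nrm (u : ℝ × ℝ) : |u.2| ≤ nrm u := by
  rw [nrm, ← Real.sqrt_sq_eq_abs]
  exact Real.sqrt_le_sqrt (by nlinarith [sq_nonneg u.1])

lemma nrm_le_abs_add (u : ℝ × ℝ) : nrm u ≤ |u.1| + |u.2| := by
  rw [nrm]
  have h : u.1 ^ 2 + u.2 ^ 2 ≤ (|u.1| + |u.2|) ^ 2 := by
    nlinarith [sq_abs u.1, sq_abs u.2, mul_nonneg (abs_nonneg u.1) (abs_nonneg u.2)]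
  calc Real.sqrt (u.1 ^ 2 + u.2 ^ 2) ≤ Real.sqrt ((|u.1| + |u.2|) ^ 2) := Real.sqrt_le_sqrt h
    _ = |u.1| + |u.2| := Real.sqrt_sq (by positivity)

/-- The continuants of `of v` have integer entries. -/
lemma contsAux_int (v : ℝ) : ∀ n : ℕ,
    (∃ a : ℤ, ((GenContFract.of v).contsAux n).a = a) ∧
    (∃ b : ℤ, ((GenContFract.of v).contsAux n).b = b) := by
  intro n
  induction n using Nat.strong_induction_on with
  | _ n ih =>
    match n with
    | 0 => exact ⟨⟨1, by simp [GenContFract.contsAux]⟩, ⟨0, by simp [GenContFract.contsAux]⟩⟩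
    | 1 =>
      refine ⟨⟨⌊v⌋, ?_⟩, ⟨1, ?_⟩⟩ <;>
        simp [GenContFract.contsAux, GenContFract.of_h_eq_floor]
    | (n + 2) =>
      obtain ⟨⟨a₀, ha₀⟩, ⟨b₀, hb₀⟩⟩ := ih n (by omega)
      obtain ⟨⟨a₁, ha₁⟩, ⟨b₁, hb₁⟩⟩ := ih (n + 1) (by omega)
      cases hs : (GenContFract.of v).s.get? n with
      | none =>
        refine ⟨⟨a₁, ?_⟩, ⟨b₁, ?_⟩⟩ <;>
          simp [GenContFract.contsAux, hs, ha₁, hb₁]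
      | some gp =>
        obtain ⟨hgpa, z, hgpb⟩ :=
          GenContFract.of_partNum_eq_one_and_exists_int_partDen_eq (v := v) hs
        refine ⟨⟨z * a₁ + a₀, ?_⟩, ⟨z * b₁ + b₀, ?_⟩⟩ <;>
          · simp only [GenContFract.contsAux, hs, GenContFract.nextConts,
              GenContFract.nextNum, GenContFract.nextDen, ha₀, hb₀, ha₁, hb₁, hgpa, hgpb]
          <;> push_cast <;> ring

lemma num_den_int (v : ℝ) (k : ℕ) :
    (∃ p : ℤ, (GenContFract.of v).nums k = p) ∧
    (∃ q : ℤ, (GenContFract.of v).dens k = q) := by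
  obtain ⟨ha, hb⟩ := contsAux_int v (k + 1)
  constructor
  · obtain ⟨a, ha⟩ := ha
    exact ⟨a, by rw [GenContFract.num_eq_conts_a, GenContFract.nth_cont_eq_succ_nth_contAux]; exact ha⟩
  · obtain ⟨b, hb⟩ := hb
    exact ⟨b, by rw [GenContFract.den_eq_conts_b, GenContFract.nth_cont_eq_succ_nth_contAux]; exact hb⟩

/-- Key analytic inequality. -/
lemma key_ineq (c₀ d₀ e₀ : ℝ) (hc₀ : 0 < c₀) (hd₀ : 0 < d₀) (he : max d₀ 2 < e₀) :
    ∃ C : ℝ, 1 ≤ C ∧ ∀ N : ℝ, Real.exp C ≤ N → ∀ t : ℝ, e₀ ≤ t →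
      1 ≤ Real.log N ∧ 3 * N / c₀ ≤ N ^ (1 + t) ∧
      3 / c₀ * N * (Real.exp t * N * Real.log N) ^ d₀ ≤ N ^ (1 + t) := by
  have hd₀e : d₀ < e₀ := lt_of_le_of_lt (le_max_left _ _) he
  have h2e : (2 : ℝ) < e₀ := lt_of_le_of_lt (le_max_right _ _) he
  obtain ⟨ε, hε, he2⟩ : ∃ ε : ℝ, 0 < ε ∧ e₀ = d₀ + 2 * ε :=
    ⟨(e₀ - d₀) / 2, by linarith, by ring⟩
  set D : ℝ := |Real.log (3 / c₀)| with hD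
  have hD0 : 0 ≤ D := abs_nonneg _
  have hed : 0 ≤ e₀ * d₀ := mul_nonneg (by linarith) hd₀.le
  have haux1 : (0:ℝ) ≤ (2 * d₀ / ε) ^ 2 := sq_nonneg _
  have haux2 : (0:ℝ) ≤ (D + e₀ * d₀) / ε := div_nonneg (by linarith) hε.le
  have hC1 : 1 ≤ 1 + d₀ + (2 * d₀ / ε) ^ 2 + (D + e₀ * d₀) / ε + D := by linarith
  refine ⟨1 + d₀ + (2 * d₀ / ε) ^ 2 + (D + e₀ * d₀) / ε + D, hC1, ?_⟩
  set C : ℝ := 1 + d₀ + (2 * d₀ / ε) ^ 2 + (D + e₀ * d₀) / ε + D with hC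
  intro N hN t ht
  have hN0 : 0 < N := lt_of_lt_of_le (Real.exp_pos C) hN
  set y : ℝ := Real.log N with hy
  have hyC : C ≤ y := by
    rw [hy, ← Real.log_exp C]
    exact Real.log_le_log (Real.exp_pos C) hN
  have hy1 : 1 ≤ y := le_trans hC1 hyC
  have hyd : d₀ ≤ y := by
    simp only [hC] at hyC; linarith
  have hyε : D + e₀ * d₀ ≤ ε * y := by
    have h1 : (D + e₀ * d₀) / ε ≤ y := by
      simp only [hC] at hyC; linarith
    calc D + e₀ * d₀ = ε * ((D + e₀ * d₀) / ε) := by field_simp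
      _ ≤ ε * y := by exact mul_le_mul_of_nonneg_left h1 hε.le
  have hysq : (2 * d₀ / ε) ^ 2 ≤ y := by
    simp only [hC] at hyC; linarith
  -- basic: N ≥ 3 / c₀
  have hN3c : 3 / c₀ ≤ N := by
    have h1 : Real.log (3 / c₀) ≤ y := le_trans (le_abs_self _)
      (by simp only [hC] at hyC; linarith)
    calc 3 / c₀ = Real.exp (Real.log (3 / c₀)) := (Real.exp_log (by positivity)).symm
      _ ≤ Real.exp y := Real.exp_le_exp.mpr h1
      _ = N := Real.exp_log hN0
  have hN1 : 1 ≤ N := by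
    calc (1:ℝ) = Real.exp 0 := (Real.exp_zero).symm
      _ ≤ Real.exp C := Real.exp_le_exp.mpr (by linarith)
      _ ≤ N := hN
  refine ⟨hy1, ?_, ?_⟩
  · -- 3 N / c₀ ≤ N ^ (1+t)
    have h3 : N ^ (3 : ℝ) ≤ N ^ (1 + t) :=
      Real.rpow_le_rpow_of_exponent_le hN1 (by linarith)
    have h4 : N ^ (3 : ℝ) = N * N * N := by
      rw [show (3:ℝ) = ((3:ℕ):ℝ) by norm_num, Real.rpow_natCast]; ring
    have h3c : 3 ≤ c₀ * N := by
      have := mul_le_mul_of_nonneg_left hN3c hc₀.le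
      calc (3:ℝ) = c₀ * (3 / c₀) := by field_simp
        _ ≤ c₀ * N := this
    have h5 : 3 * N / c₀ ≤ N * N * N := by
      rw [div_le_iff₀ hc₀]
      nlinarith
    calc 3 * N / c₀ ≤ N * N * N := h5
      _ = N ^ (3:ℝ) := h4.symm
      _ ≤ N ^ (1 + t) := h3
  · -- main inequality
    set A : ℝ := Real.exp t * N * y with hA
    have hA0 : 0 < A := by
      have := Real.exp_pos t; positivity
    have hL0 : 0 < 3 / c₀ * N * A ^ d₀ := by positivity
    have hR0 : (0:ℝ) < N ^ (1 + t) := Real.rpow_pos_of_pos hN0 _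
    rw [← Real.log_le_log_iff hL0 hR0]
    have hlogL : Real.log (3 / c₀ * N * A ^ d₀)
        = Real.log (3 / c₀) + y + d₀ * (t + y + Real.log y) := by
      rw [Real.log_mul (by positivity) (by positivity),
        Real.log_mul (by positivity) hN0.ne', Real.log_rpow hA0,
        Real.log_mul (by positivity) (by linarith), Real.log_mul (Real.exp_pos t).ne' hN0.ne',
        Real.log_exp]
      try ring
    have hlogR : Real.log (N ^ (1 + t)) = (1 + t) * y := Real.log_rpow hN0 _
    rw [hlogL, hlogR]
    -- bound log y
    have hy0 : (0:ℝ) ≤ y := by linarith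
    have hlogy : Real.log y ≤ 2 * Real.sqrt y := by
      have h1 : Real.log (Real.sqrt y) = Real.log y / 2 := Real.log_sqrt hy0
      have h2 : Real.log (Real.sqrt y) ≤ Real.sqrt y := by
        have := Real.log_le_sub_one_of_pos (show (0:ℝ) < Real.sqrt y by
          rw [Real.sqrt_pos]; linarith)
        linarith
      linarith
    have hsy : 2 * d₀ / ε ≤ Real.sqrt y :=
      (Real.le_sqrt (by positivity) hy0).mpr hysq
    have hsq2 : 2 * d₀ * Real.sqrt y ≤ ε * y := by
      have h1 : Real.sqrt y * Real.sqrt y = y := Real.mul_self_sqrt hy0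
      have h4 : 2 * d₀ ≤ ε * Real.sqrt y := by
        have h5 := mul_le_mul_of_nonneg_left hsy hε.le
        rwa [show ε * (2 * d₀ / ε) = 2 * d₀ by field_simp] at h5
      calc 2 * d₀ * Real.sqrt y ≤ ε * Real.sqrt y * Real.sqrt y :=
            mul_le_mul_of_nonneg_right h4 (Real.sqrt_nonneg y)
        _ = ε * y := by rw [mul_assoc, h1]
    have hdlogy : d₀ * Real.log y ≤ ε * y := by
      calc d₀ * Real.log y ≤ d₀ * (2 * Real.sqrt y) :=
            mul_le_mul_of_nonneg_left hlogy hd₀.le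
        _ = 2 * d₀ * Real.sqrt y := by ring
        _ ≤ ε * y := hsq2
    have hty : e₀ * (y - d₀) ≤ t * (y - d₀) :=
      mul_le_mul_of_nonneg_right ht (by linarith)
    have hlog3 : Real.log (3 / c₀) ≤ D := le_abs_self _
    have hε2y : e₀ * y = d₀ * y + 2 * (ε * y) := by rw [he2]; ring
    linarith [hyε, hdlogy, hty, hlog3, hε2y]

end SDioAux

end

noncomputable section

set_option maxHeartbeats 1000000 in
theorem slowly_divergent_dio
    (x₀ y₀ c₀ d₀ : ℝ) (hc₀ : 0 < c₀) (hd₀ : 0 < d₀)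
    (hdio : DioCond x₀ y₀ c₀ d₀) (e₀ : ℝ) (he₀ : max d₀ 2 < e₀) :
    ∃ L₀ : ℝ, 0 < L₀ ∧
      ∀ w ∈ Wset x₀ y₀, 0 < w.2 → L₀ ≤ nrm w →
        ∀ t : ℝ, e₀ ≤ t →
          ∃ k : ℕ,
            Real.exp t * nrm w * Real.log (nrm w) ≤ nrm (convVec (w.1 / w.2) k) ∧
            nrm (convVec (w.1 / w.2) k) ≤ nrm w ^ (1 + t) := by
  classical
  obtain ⟨C, hC1, hkey⟩ := SDioAux.key_ineq c₀ d₀ e₀ hc₀ hd₀ he₀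
  refine ⟨Real.exp C, Real.exp_pos C, ?_⟩
  rintro w ⟨m, n, hmn⟩ hw2 hwN t ht
  obtain ⟨ε, hε, hw1e, hw2e⟩ :
      ∃ ε : ℝ, (ε = 1 ∨ ε = -1) ∧ w.1 = ε * x₀ + m ∧ w.2 = ε * y₀ + n := by
    rcases hmn with h | h
    · exact ⟨1, Or.inl rfl, by rw [h]; norm_num, by rw [h]; norm_num⟩
    · exact ⟨-1, Or.inr rfl, by rw [h]; norm_num, by rw [h]; norm_num⟩
  have hN0 : 0 < nrm w := lt_of_lt_of_le (Real.exp_pos C) hwN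
  obtain ⟨hy1, h3N, hmain⟩ := hkey (nrm w) hwN t ht
  -- the Diophantine estimate in terms of w
  have hDK : ∀ p q : ℤ, ¬(p = 0 ∧ q = 0) →
      c₀ / (max |(p : ℝ)| |(q : ℝ)|) ^ d₀ < |(q : ℝ) * w.1 - (p : ℝ) * w.2| := by
    intro p q hpq
    rw [hw1e, hw2e]
    rcases hε with h1 | h1 <;> subst h1
    · have h := hdio q (-p) (by rintro ⟨h1, h2⟩; exact hpq ⟨by omega, h1⟩) (q * m - p * n)
      push_cast at h
      rw [abs_neg, max_comm] at h
      have heq : (q : ℝ) * (1 * x₀ + m) - (p : ℝ) * (1 * y₀ + n)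
          = (q : ℝ) * x₀ + -(p : ℝ) * y₀ + ((q : ℝ) * m - (p : ℝ) * n) := by ring
      rw [heq]
      exact h
    · have h := hdio (-q) p (by rintro ⟨h1, h2⟩; exact hpq ⟨h2, by omega⟩) (q * m - p * n)
      push_cast at h
      rw [abs_neg, max_comm] at h
      have heq : (q : ℝ) * (-1 * x₀ + m) - (p : ℝ) * (-1 * y₀ + n)
          = -(q : ℝ) * x₀ + (p : ℝ) * y₀ + ((q : ℝ) * m - (p : ℝ) * n) := by ring
      rw [heq]
      exact h
  -- w.2 > c₀
  have hc₀w2 : c₀ < w.2 := by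
    have h := hDK (-1) 0 (by norm_num)
    rw [show ((0 : ℤ) : ℝ) * w.1 - ((-1 : ℤ) : ℝ) * w.2 = w.2 by push_cast; ring] at h
    rw [abs_of_pos hw2] at h
    simpa using h
  have hw2N : w.2 ≤ nrm w := le_trans (le_abs_self _) (SDioAux.abs_snd_le_nrm w)
  have hw1N : |w.1| ≤ nrm w := SDioAux.abs_fst_le_nrm w
  have hαw : w.1 = w.1 / w.2 * w.2 := by field_simp
  -- non-termination of the continued fraction of α
  have hnt : ∀ j : ℕ, ¬(GenContFract.of (w.1 / w.2)).TerminatedAt j := by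
    intro j hterm
    obtain ⟨r, hr⟩ := (GenContFract.terminates_iff_rat (w.1 / w.2)).mp ⟨j, hterm⟩
    have h := hDK r.num (r.den : ℤ)
      (by rintro ⟨-, h2⟩; exact r.den_nz (by exact_mod_cast h2))
    have hzero : ((r.den : ℤ) : ℝ) * w.1 - (r.num : ℝ) * w.2 = 0 := by
      rw [hαw, hr, Rat.cast_def]
      have hdne : (r.den : ℝ) ≠ 0 := by
        exact_mod_cast Nat.cast_ne_zero.mpr r.den_nz
      field_simp
      simp
    rw [hzero, abs_zero] at h
    have hone : (1 : ℝ) ≤ |((r.den : ℤ) : ℝ)| := by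
      rw [abs_of_nonneg (by positivity)]
      exact_mod_cast r.pos
    have hpos : 0 < c₀ / (max |(r.num : ℝ)| |((r.den : ℤ) : ℝ)|) ^ d₀ :=
      div_pos hc₀ (Real.rpow_pos_of_pos
        (lt_of_lt_of_le zero_lt_one (le_trans hone (le_max_right _ _))) _)
    linarith
  -- denominators are at least 1
  have hdpos : ∀ j : ℕ, 1 ≤ (GenContFract.of (w.1 / w.2)).dens j := by
    intro j
    have h := GenContFract.succ_nth_fib_le_of_nth_den (v := w.1 / w.2) (n := j)
      (Or.inr (hnt _))
    have h2 : (1 : ℝ) ≤ (Nat.fib (j + 1) : ℝ) := by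
      exact_mod_cast Nat.one_le_iff_ne_zero.mpr (Nat.fib_pos.mpr (Nat.succ_pos j)).ne'
    linarith
  -- a convergent vector eventually exceeds the lower threshold
  have hex : ∃ k : ℕ,
      Real.exp t * nrm w * Real.log (nrm w) ≤ nrm (convVec (w.1 / w.2) k) := by
    obtain ⟨n0, hn0⟩ := exists_nat_ge (Real.exp t * nrm w * Real.log (nrm w))
    refine ⟨n0 + 5, ?_⟩
    have hf1 : (Nat.fib (n0 + 5 + 1) : ℝ) ≤ (GenContFract.of (w.1 / w.2)).dens (n0 + 5) :=
      GenContFract.succ_nth_fib_le_of_nth_den (Or.inr (hnt _))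
    have hf2 : n0 + 5 ≤ Nat.fib (n0 + 5 + 1) :=
      le_trans (Nat.le_fib_self (by omega)) Nat.fib_le_fib_succ
    have hd : (GenContFract.of (w.1 / w.2)).dens (n0 + 5) ≤ nrm (convVec (w.1 / w.2) (n0 + 5)) := by
      have h := SDioAux.abs_snd_le_nrm (convVec (w.1 / w.2) (n0 + 5))
      rwa [show (convVec (w.1 / w.2) (n0 + 5)).2
          = (GenContFract.of (w.1 / w.2)).dens (n0 + 5) from rfl,
        abs_of_nonneg GenContFract.zero_le_of_den] at h
    calc Real.exp t * nrm w * Real.log (nrm w) ≤ n0 := hn0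
      _ ≤ ((n0 + 5 : ℕ) : ℝ) := by push_cast; linarith
      _ ≤ (Nat.fib (n0 + 5 + 1) : ℝ) := by exact_mod_cast hf2
      _ ≤ _ := le_trans hf1 hd
  obtain ⟨k, hk, hmin⟩ : ∃ k : ℕ,
      (Real.exp t * nrm w * Real.log (nrm w) ≤ nrm (convVec (w.1 / w.2) k)) ∧
      ∀ j < k, nrm (convVec (w.1 / w.2) j) < Real.exp t * nrm w * Real.log (nrm w) :=
    ⟨Nat.find hex, Nat.find_spec hex, fun j hj => not_le.mp (Nat.find_min hex hj)⟩
  refine ⟨k, hk, ?_⟩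
  -- generic upper bound on the k-th convergent vector
  obtain ⟨⟨p, hp⟩, ⟨q, hq⟩⟩ := SDioAux.num_den_int (w.1 / w.2) k
  have hq1 : (1 : ℝ) ≤ (q : ℝ) := hq ▸ hdpos k
  have hq0 : (0 : ℝ) < (q : ℝ) := zero_lt_one.trans_le hq1
  have happ := GenContFract.abs_sub_convs_le (v := w.1 / w.2) (hnt k)
  have hconv : (GenContFract.of (w.1 / w.2)).convs k = (p : ℝ) / (q : ℝ) := by
    rw [GenContFract.conv_eq_num_div_den, hp, hq]
  have hdk1 : (1 : ℝ) ≤ (GenContFract.of (w.1 / w.2)).dens (k + 1) := hdpos (k + 1)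
  have hsub1 : |w.1 / w.2 - (p : ℝ) / (q : ℝ)| ≤ 1 := by
    rw [hconv, hq] at happ
    refine happ.trans ?_
    rw [div_le_one (by nlinarith)]
    nlinarith
  have hpabs : |(p : ℝ)| ≤ (|w.1 / w.2| + 1) * q := by
    have h1 : |(p : ℝ) / (q : ℝ)| ≤ |w.1 / w.2| + 1 := by
      calc |(p : ℝ) / (q : ℝ)| = |w.1 / w.2 + ((p : ℝ) / q - w.1 / w.2)| := by ring_nf
        _ ≤ |w.1 / w.2| + |(p : ℝ) / q - w.1 / w.2| := abs_add_le _ _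
        _ = |w.1 / w.2| + |w.1 / w.2 - (p : ℝ) / q| := by rw [abs_sub_comm]
        _ ≤ |w.1 / w.2| + 1 := by linarith
    rw [abs_div, abs_of_pos hq0, div_le_iff₀ hq0] at h1
    exact h1
  have hnv : nrm (convVec (w.1 / w.2) k) ≤ (|w.1 / w.2| + 2) * q := by
    have h1 := SDioAux.nrm_le_abs_add (convVec (w.1 / w.2) k)
    rw [show (convVec (w.1 / w.2) k).1 = (GenContFract.of (w.1 / w.2)).nums k from rfl,
      show (convVec (w.1 / w.2) k).2 = (GenContFract.of (w.1 / w.2)).dens k from rfl,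
      hp, hq, abs_of_pos hq0] at h1
    have h2 : (|w.1 / w.2| + 1) * q + q = (|w.1 / w.2| + 2) * q := by ring
    linarith
  have hαb : |w.1 / w.2| + 2 ≤ 3 * nrm w / w.2 := by
    have h1 : |w.1 / w.2| ≤ nrm w / w.2 := by
      rw [abs_div, abs_of_pos hw2]
      gcongr
    have h2 : (2 : ℝ) ≤ 2 * nrm w / w.2 := by
      rw [le_div_iff₀ hw2]; linarith
    have h3 : nrm w / w.2 + 2 * nrm w / w.2 = 3 * nrm w / w.2 := by ring
    linarith
  rcases Nat.eq_zero_or_pos k with hk0 | hkpos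
  · -- k = 0 : the zeroth convergent vector
    have hqone : (1 : ℝ) = (q : ℝ) := by
      have h := hq
      rw [hk0, GenContFract.zeroth_den_eq_one] at h
      exact h
    calc nrm (convVec (w.1 / w.2) k) ≤ (|w.1 / w.2| + 2) * q := hnv
      _ = |w.1 / w.2| + 2 := by rw [← hqone]; ring
      _ ≤ 3 * nrm w / w.2 := hαb
      _ ≤ 3 * nrm w / c₀ := by gcongr
      _ ≤ nrm w ^ (1 + t) := h3N
  · -- k = j + 1
    obtain ⟨j, rfl⟩ : ∃ j, k = j + 1 := ⟨k - 1, by omega⟩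
    have hminj : nrm (convVec (w.1 / w.2) j) < Real.exp t * nrm w * Real.log (nrm w) :=
      hmin j (Nat.lt_succ_self j)
    obtain ⟨⟨p', hp'⟩, ⟨q', hq'⟩⟩ := SDioAux.num_den_int (w.1 / w.2) j
    have hq'1 : (1 : ℝ) ≤ (q' : ℝ) := hq' ▸ hdpos j
    have hq'0 : (0 : ℝ) < (q' : ℝ) := zero_lt_one.trans_le hq'1
    have happ' := GenContFract.abs_sub_convs_le (v := w.1 / w.2) (hnt j)
    have hconv' : (GenContFract.of (w.1 / w.2)).convs j = (p' : ℝ) / (q' : ℝ) := by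
      rw [GenContFract.conv_eq_num_div_den, hp', hq']
    rw [hconv', hq', hq] at happ'
    -- happ' : |α - p'/q'| ≤ 1 / (q' * q)
    have hlin : |(q' : ℝ) * w.1 - (p' : ℝ) * w.2| ≤ w.2 / q := by
      have h1 : (q' : ℝ) * w.1 - (p' : ℝ) * w.2
          = w.2 * (q' : ℝ) * (w.1 / w.2 - (p' : ℝ) / (q' : ℝ)) := by
        field_simp
      rw [h1, abs_mul, abs_of_pos (mul_pos hw2 hq'0)]
      have h3 : w.2 * (q' : ℝ) * |w.1 / w.2 - (p' : ℝ) / q'|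
          ≤ w.2 * (q' : ℝ) * (1 / ((q' : ℝ) * q)) :=
        mul_le_mul_of_nonneg_left happ' (mul_pos hw2 hq'0).le
      have h4 : w.2 * (q' : ℝ) * (1 / ((q' : ℝ) * q)) = w.2 / q := by
        field_simp
      linarith
    have hdio' := hDK p' q' (by
      rintro ⟨-, h2⟩
      rw [h2] at hq'1
      norm_num at hq'1)
    have hMq : (q' : ℝ) ≤ max |(p' : ℝ)| |(q' : ℝ)| :=
      le_trans (le_abs_self _) (le_max_right _ _)
    have hM0 : 0 < max |(p' : ℝ)| |(q' : ℝ)| := lt_of_lt_of_le hq'0 hMq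
    have hMA : max |(p' : ℝ)| |(q' : ℝ)| ≤ Real.exp t * nrm w * Real.log (nrm w) := by
      have h1 : |(p' : ℝ)| ≤ nrm (convVec (w.1 / w.2) j) := by
        have h := SDioAux.abs_fst_le_nrm (convVec (w.1 / w.2) j)
        rwa [show (convVec (w.1 / w.2) j).1 = (GenContFract.of (w.1 / w.2)).nums j from rfl,
          hp'] at h
      have h2 : |(q' : ℝ)| ≤ nrm (convVec (w.1 / w.2) j) := by
        have h := SDioAux.abs_snd_le_nrm (convVec (w.1 / w.2) j)
        rwa [show (convVec (w.1 / w.2) j).2 = (GenContFract.of (w.1 / w.2)).dens j from rfl,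
          hq'] at h
      exact max_le (le_trans h1 hminj.le) (le_trans h2 hminj.le)
    have hA0 : 0 < Real.exp t * nrm w * Real.log (nrm w) := lt_of_lt_of_le hM0 hMA
    have hMd : (max |(p' : ℝ)| |(q' : ℝ)|) ^ d₀
        ≤ (Real.exp t * nrm w * Real.log (nrm w)) ^ d₀ :=
      Real.rpow_le_rpow hM0.le hMA hd₀.le
    have hAd0 : 0 < (Real.exp t * nrm w * Real.log (nrm w)) ^ d₀ :=
      Real.rpow_pos_of_pos hA0 _
    have hMd0 : 0 < (max |(p' : ℝ)| |(q' : ℝ)|) ^ d₀ := Real.rpow_pos_of_pos hM0 _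
    have h5 : c₀ / (Real.exp t * nrm w * Real.log (nrm w)) ^ d₀
        ≤ c₀ / (max |(p' : ℝ)| |(q' : ℝ)|) ^ d₀ := by gcongr
    have h6 : c₀ / (Real.exp t * nrm w * Real.log (nrm w)) ^ d₀ < w.2 / q :=
      lt_of_le_of_lt h5 (lt_of_lt_of_le hdio' hlin)
    have h7 : (q : ℝ) ≤ w.2 * (Real.exp t * nrm w * Real.log (nrm w)) ^ d₀ / c₀ := by
      rw [div_lt_div_iff₀ hAd0 hq0] at h6
      rw [le_div_iff₀ hc₀]
      linarith
    calc nrm (convVec (w.1 / w.2) (j + 1)) ≤ (|w.1 / w.2| + 2) * q := hnv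
      _ ≤ (3 * nrm w / w.2) * (w.2 * (Real.exp t * nrm w * Real.log (nrm w)) ^ d₀ / c₀) := by
        apply mul_le_mul hαb h7 hq0.le
        positivity
      _ = 3 / c₀ * nrm w * (Real.exp t * nrm w * Real.log (nrm w)) ^ d₀ := by
        field_simp
      _ ≤ nrm w ^ (1 + t) := hmain
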